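/- Let X and Y be Banach spaces, let J : X* ⊗π Y → L(X, Y) be the canonical map sending ∑ₙ x*ₙ ⊗ yₙ to the operator x ↦ ∑ₙ x*ₙ(x) yₙ, and let T ∈ N(X, Y) be a nuclear operator with a representation T = ∑ₙ λₙ x*ₙ ⊗ yₙ where λₙ > 0, x*ₙ ∈ S_{X*}, yₙ ∈ S_Y and ∑ₙ λₙ < ∞. Then the following are equivalent: (1) ‖T‖_N = ∑ₙ λₙ (i.e. T ∈ NA_N(X, Y)); (2) there is a norm-one functional G ∈ (X* ⊗π Y)* vanishing on ker J such that G(x*ₙ ⊗ yₙ) = 1 for every n; (3) every norm-one functional G ∈ (X* ⊗π Y)* vanishing on ker J whose induced functional on N(X, Y) = (X* ⊗π Y)/ker J sends T to ‖T‖_N satisfies G(x*ₙ ⊗ yₙ) = 1 for every n. -/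

import Mathlib

noncomputable section

open scoped BigOperators

/-- The predicate stating that the Banach space `Z`, together with the bounded bilinear map
`t : X → Y → Z` and the correspondence `lift` between operators `X → Y*` and functionals on `Z`,
realizes the projective tensor product `X ⊗π Y`.  The field `norm_eq_sInf` says that the norm of
`Z` is the projective norm: `‖z‖π = inf {∑ₙ ‖xₙ‖‖yₙ‖ : z = ∑ₙ xₙ ⊗ yₙ}`, and the `lift` fields
encode the canonical isometric identification `(X ⊗π Y)* = L(X, Y*)`. -/
structure IsProjTensorProduct (X Y Z : Type*)
    [NormedAddCommGroup X] [NormedSpace ℝ X]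
    [NormedAddCommGroup Y] [NormedSpace ℝ Y]
    [NormedAddCommGroup Z] [NormedSpace ℝ Z]
    (t : X →L[ℝ] Y →L[ℝ] Z)
    (lift : (X →L[ℝ] (Y →L[ℝ] ℝ)) → (Z →L[ℝ] ℝ)) : Prop where
  norm_tmul_le : ∀ (x : X) (y : Y), ‖t x y‖ ≤ ‖x‖ * ‖y‖
  exists_rep : ∀ z : Z, ∃ (x : ℕ → X) (y : ℕ → Y),
    Summable (fun n => ‖x n‖ * ‖y n‖) ∧ HasSum (fun n => t (x n) (y n)) z
  norm_eq_sInf : ∀ z : Z, ‖z‖ = sInf {r : ℝ | ∃ (x : ℕ → X) (y : ℕ → Y),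
    Summable (fun n => ‖x n‖ * ‖y n‖) ∧ HasSum (fun n => t (x n) (y n)) z ∧
    r = ∑' n, ‖x n‖ * ‖y n‖}
  lift_tmul : ∀ (G : X →L[ℝ] (Y →L[ℝ] ℝ)) (x : X) (y : Y), lift G (t x y) = G x y
  norm_lift : ∀ G : X →L[ℝ] (Y →L[ℝ] ℝ), ‖lift G‖ = ‖G‖
  lift_surjective : Function.Surjective lift

/-- An element `z ∈ X ⊗π Y` attains its projective norm if it admits a representation
`z = ∑ₙ xₙ ⊗ yₙ` with `∑ₙ ‖xₙ‖‖yₙ‖ < ∞` and `‖z‖π = ∑ₙ ‖xₙ‖‖yₙ‖`. -/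
def AttainsProjNorm {X Y Z : Type*}
    [NormedAddCommGroup X] [NormedSpace ℝ X]
    [NormedAddCommGroup Y] [NormedSpace ℝ Y]
    [NormedAddCommGroup Z] [NormedSpace ℝ Z]
    (t : X →L[ℝ] Y →L[ℝ] Z) (z : Z) : Prop :=
  ∃ (x : ℕ → X) (y : ℕ → Y),
    Summable (fun n => ‖x n‖ * ‖y n‖) ∧ HasSum (fun n => t (x n) (y n)) z ∧
    ‖z‖ = ∑' n, ‖x n‖ * ‖y n‖

/-- `r` is the value `∑ₙ ‖x*ₙ‖‖yₙ‖` of a nuclear representation `T = ∑ₙ x*ₙ ⊗ yₙ`,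
i.e. `T x = ∑ₙ x*ₙ(x) yₙ` with `∑ₙ ‖x*ₙ‖‖yₙ‖ < ∞`. -/
def IsNuclearRep {X Y : Type*} [NormedAddCommGroup X] [NormedSpace ℝ X]
    [NormedAddCommGroup Y] [NormedSpace ℝ Y]
    (T : X →L[ℝ] Y) (r : ℝ) : Prop :=
  ∃ (f : ℕ → (X →L[ℝ] ℝ)) (y : ℕ → Y),
    Summable (fun n => ‖f n‖ * ‖y n‖) ∧
    (∀ x : X, HasSum (fun n => f n x • y n) (T x)) ∧
    r = ∑' n, ‖f n‖ * ‖y n‖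

/-- `T` is a nuclear operator. -/
def IsNuclearOp {X Y : Type*} [NormedAddCommGroup X] [NormedSpace ℝ X]
    [NormedAddCommGroup Y] [NormedSpace ℝ Y] (T : X →L[ℝ] Y) : Prop :=
  ∃ r : ℝ, IsNuclearRep T r

/-- The nuclear norm `‖T‖_N = inf {∑ₙ ‖x*ₙ‖‖yₙ‖ : T = ∑ₙ x*ₙ ⊗ yₙ}`. -/
def nuclearNorm {X Y : Type*} [NormedAddCommGroup X] [NormedSpace ℝ X]
    [NormedAddCommGroup Y] [NormedSpace ℝ Y] (T : X →L[ℝ] Y) : ℝ :=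
  sInf {r : ℝ | IsNuclearRep T r}

/-- `T` attains its nuclear norm: some nuclear representation realizes `‖T‖_N`. -/
def AttainsNuclearNorm {X Y : Type*} [NormedAddCommGroup X] [NormedSpace ℝ X]
    [NormedAddCommGroup Y] [NormedSpace ℝ Y] (T : X →L[ℝ] Y) : Prop :=
  IsNuclearRep T (nuclearNorm T)

section AuxNA

variable {X Y Z : Type*} [NormedAddCommGroup X] [NormedSpace ℝ X]
    [NormedAddCommGroup Y] [NormedSpace ℝ Y]
    [NormedAddCommGroup Z] [NormedSpace ℝ Z]

lemma auxNA_bddBelow (T : X →L[ℝ] Y) : BddBelow {r : ℝ | IsNuclearRep T r} := by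
  refine ⟨0, ?_⟩
  rintro r ⟨g, y, hs, -, rfl⟩
  exact tsum_nonneg fun n => mul_nonneg (norm_nonneg _) (norm_nonneg _)

lemma auxNA_nuclearNorm_le {T : X →L[ℝ] Y} {r : ℝ} (hr : IsNuclearRep T r) :
    nuclearNorm T ≤ r := csInf_le (auxNA_bddBelow T) hr

lemma auxNA_eval {t : (X →L[ℝ] ℝ) →L[ℝ] Y →L[ℝ] Z} {J : Z →L[ℝ] (X →L[ℝ] Y)}
    (hJ : ∀ (f : X →L[ℝ] ℝ) (y : Y) (x : X), J (t f y) x = f x • y)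
    {g : ℕ → (X →L[ℝ] ℝ)} {y : ℕ → Y} {z : Z}
    (hz : HasSum (fun n => t (g n) (y n)) z) (x : X) :
    HasSum (fun n => g n x • y n) (J z x) := by
  have h2 := ((ContinuousLinearMap.apply ℝ Y x).comp J).hasSum hz
  simpa [hJ] using h2

lemma auxNA_elem {t : (X →L[ℝ] ℝ) →L[ℝ] Y →L[ℝ] Z}
    (ht : ∀ (g : X →L[ℝ] ℝ) (y : Y), ‖t g y‖ ≤ ‖g‖ * ‖y‖) [CompleteSpace Z]
    {g : ℕ → (X →L[ℝ] ℝ)} {y : ℕ → Y}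
    (hs : Summable fun n => ‖g n‖ * ‖y n‖) :
    ∃ w : Z, HasSum (fun n => t (g n) (y n)) w ∧ ‖w‖ ≤ ∑' n, ‖g n‖ * ‖y n‖ := by
  have hsum : Summable fun n => t (g n) (y n) :=
    Summable.of_norm_bounded hs fun n => ht _ _
  exact ⟨∑' n, t (g n) (y n), hsum.hasSum,
    tsum_of_norm_bounded hs.hasSum fun n => ht _ _⟩

end AuxNA

set_option maxHeartbeats 1000000 in
/-- Characterization of norm-attaining nuclear operators. Here
`Z = X* ⊗π Y`, `J : X* ⊗π Y → L(X,Y)` is the canonical map, and `T = J z₀` where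
`z₀ = ∑ₙ cₙ fₙ ⊗ yₙ` with `cₙ > 0` and unit vectors `fₙ ∈ S_{X*}`, `yₙ ∈ S_Y`. TFAE:
(1) `‖T‖_N = ∑ₙ cₙ`; (2) there is a norm-one functional `G` on `X* ⊗π Y` vanishing on
`ker J` with `G(fₙ ⊗ yₙ) = 1` for all n; (3) every norm-one functional `G` on `X* ⊗π Y`
vanishing on `ker J` whose induced functional on `N(X,Y)` sends `T` to `‖T‖_N`
(i.e. `G z₀ = ‖T‖_N`) satisfies `G(fₙ ⊗ yₙ) = 1` for all n. -/
theorem normAttaining_nuclear_tfae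
    {X Y Z : Type*} [NormedAddCommGroup X] [NormedSpace ℝ X] [CompleteSpace X]
    [NormedAddCommGroup Y] [NormedSpace ℝ Y] [CompleteSpace Y]
    [NormedAddCommGroup Z] [NormedSpace ℝ Z] [CompleteSpace Z]
    (t : (X →L[ℝ] ℝ) →L[ℝ] Y →L[ℝ] Z)
    (lift : ((X →L[ℝ] ℝ) →L[ℝ] (Y →L[ℝ] ℝ)) → (Z →L[ℝ] ℝ))
    (h : IsProjTensorProduct (X →L[ℝ] ℝ) Y Z t lift)
    (J : Z →L[ℝ] (X →L[ℝ] Y))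
    (hJ : ∀ (f : X →L[ℝ] ℝ) (y : Y) (x : X), J (t f y) x = f x • y)
    (T : X →L[ℝ] Y) (c : ℕ → ℝ) (f : ℕ → (X →L[ℝ] ℝ)) (y : ℕ → Y)
    (hc : ∀ n, 0 < c n) (hf : ∀ n, ‖f n‖ = 1) (hy : ∀ n, ‖y n‖ = 1)
    (hsum : Summable c)
    (z₀ : Z) (hz₀ : HasSum (fun n => c n • t (f n) (y n)) z₀) (hJz₀ : J z₀ = T) :
    List.TFAE
      [ nuclearNorm T = ∑' n, c n,
        ∃ G : Z →L[ℝ] ℝ, ‖G‖ = 1 ∧ (∀ w : Z, J w = 0 → G w = 0) ∧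
          ∀ n, G (t (f n) (y n)) = 1,
        ∀ G : Z →L[ℝ] ℝ, ‖G‖ = 1 → (∀ w : Z, J w = 0 → G w = 0) →
          G z₀ = nuclearNorm T → ∀ n, G (t (f n) (y n)) = 1 ] := by
  classical
  set S : ℝ := ∑' n, c n with hSdef
  have hcs : HasSum c S := hsum.hasSum
  have hS_pos : 0 < S := Summable.tsum_pos hsum (fun n => (hc n).le) 0 (hc 0)
  -- t (c n • f n) (y n) = c n • t (f n) (y n)
  have hz₀' : HasSum (fun n => t (c n • f n) (y n)) z₀ := by
    have he : (fun n => t (c n • f n) (y n)) = fun n => c n • t (f n) (y n) := by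
      funext n; simp
    rw [he]; exact hz₀
  have hnormc : (fun n => ‖c n • f n‖ * ‖y n‖) = c := by
    funext n
    have hns := norm_smul (c n) (f n)
    rw [hns, hf n, hy n, mul_one, mul_one, Real.norm_eq_abs]
    exact abs_of_pos (hc n)
  have hrepS : IsNuclearRep T S :=
    ⟨fun n => c n • f n, y, by rw [hnormc]; exact hsum,
     fun x => by
       have h2 := auxNA_eval hJ hz₀' x
       rwa [hJz₀] at h2,
     by rw [hnormc]⟩
  -- the kernel of J and the quotient
  set K : Submodule ℝ Z := LinearMap.ker (J : Z →ₗ[ℝ] (X →L[ℝ] Y)) with hKdef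
  haveI hKc : IsClosed (K : Set Z) := by rw [hKdef]; exact ContinuousLinearMap.isClosed_ker J
  have hmono : ∀ z : Z, J z = T → nuclearNorm T ≤ ‖z‖ := by
    intro z hz
    rw [h.norm_eq_sInf z]
    obtain ⟨x', y', hs', hz'⟩ := h.exists_rep z
    refine le_csInf ⟨_, x', y', hs', hz', rfl⟩ ?_
    rintro r ⟨g, yy, hs, hzz, rfl⟩
    refine auxNA_nuclearNorm_le ⟨g, yy, hs, fun x => ?_, rfl⟩
    have h2 := auxNA_eval hJ hzz x
    rwa [hz] at h2
  -- the nuclear norm is the quotient norm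
  have hdq : nuclearNorm T = ‖(Submodule.Quotient.mk z₀ : Z ⧸ K)‖ := by
    apply le_antisymm
    · refine le_of_forall_pos_le_add fun ε hε => ?_
      obtain ⟨m, hm, hmlt⟩ :=
        Submodule.Quotient.norm_mk_lt (Submodule.Quotient.mk z₀ : Z ⧸ K) hε
      have hmK : m - z₀ ∈ K := (Submodule.Quotient.eq K).mp hm
      have hJm : J m = T := by
        have h0 : J (m - z₀) = 0 := LinearMap.mem_ker.mp hmK
        rw [map_sub, sub_eq_zero] at h0
        rw [h0, hJz₀]
      exact (hmono m hJm).trans hmlt.le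
    · refine le_csInf ⟨S, hrepS⟩ ?_
      rintro r ⟨g, yy, hs, hTx, rfl⟩
      obtain ⟨w, hw, hwle⟩ := auxNA_elem h.norm_tmul_le hs
      have hJw : J w = T := ContinuousLinearMap.ext fun x =>
        (auxNA_eval hJ hw x).unique (hTx x)
      have hmk : (Submodule.Quotient.mk w : Z ⧸ K) = Submodule.Quotient.mk z₀ := by
        rw [Submodule.Quotient.eq]
        have : J (w - z₀) = 0 := by rw [map_sub, hJw, hJz₀, sub_self]
        exact LinearMap.mem_ker.mpr this
      calc ‖(Submodule.Quotient.mk z₀ : Z ⧸ K)‖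
          = ‖(Submodule.Quotient.mk w : Z ⧸ K)‖ := by rw [hmk]
        _ ≤ ‖w‖ := Submodule.Quotient.norm_mk_le _ _
        _ ≤ _ := hwle
  -- Hahn–Banach functional for a nonzero point of the quotient
  have mkG : ∀ q : Z ⧸ K, q ≠ 0 → ∃ G : Z →L[ℝ] ℝ, ‖G‖ = 1 ∧
      (∀ w : Z, J w = 0 → G w = 0) ∧
      ∀ z : Z, (Submodule.Quotient.mk z : Z ⧸ K) = q → G z = ‖q‖ := by
    intro q hqne
    obtain ⟨g, hg1, hgq⟩ := exists_dual_vector ℝ q (norm_ne_zero_iff.mpr hqne)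
    have bound : ∀ z : Z, ‖(g.toLinearMap.comp K.mkQ) z‖ ≤ 1 * ‖z‖ := by
      intro z
      calc ‖g (K.mkQ z)‖ ≤ ‖g‖ * ‖K.mkQ z‖ := g.le_opNorm _
        _ ≤ 1 * ‖z‖ := by
            rw [hg1, one_mul, one_mul]
            exact Submodule.Quotient.norm_mk_le K z
    set G : Z →L[ℝ] ℝ := LinearMap.mkContinuous (g.toLinearMap.comp K.mkQ) 1 bound with hGdef
    have hGapp : ∀ z : Z, G z = g (Submodule.Quotient.mk z) := fun z => rfl
    have hle : ‖G‖ ≤ 1 := LinearMap.mkContinuous_norm_le _ zero_le_one bound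
    have hq_pos : 0 < ‖q‖ := norm_pos_iff.mpr hqne
    have hGval : ∀ z : Z, (Submodule.Quotient.mk z : Z ⧸ K) = q → G z = ‖q‖ := by
      intro z hz
      rw [hGapp, hz]
      exact_mod_cast hgq
    have hge : 1 ≤ ‖G‖ := by
      have key : ∀ ε, 0 < ε → ‖q‖ ≤ ‖G‖ * ‖q‖ + ε := by
        intro ε hε
        obtain ⟨m, hm, hmlt⟩ := Submodule.Quotient.norm_mk_lt q hε
        have hGm : G m = ‖q‖ := hGval m hm
        calc ‖q‖ = ‖G m‖ := by rw [hGm, Real.norm_eq_abs, abs_of_nonneg hq_pos.le]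
          _ ≤ ‖G‖ * ‖m‖ := G.le_opNorm m
          _ ≤ ‖G‖ * (‖q‖ + ε) := mul_le_mul_of_nonneg_left hmlt.le (norm_nonneg _)
          _ = ‖G‖ * ‖q‖ + ‖G‖ * ε := by ring
          _ ≤ ‖G‖ * ‖q‖ + ε := by nlinarith
      have h2 : ‖q‖ ≤ ‖G‖ * ‖q‖ := le_of_forall_pos_le_add key
      nlinarith
    refine ⟨G, le_antisymm hle hge, ?_, hGval⟩
    intro w hw
    rw [hGapp, (Submodule.Quotient.mk_eq_zero K).mpr (LinearMap.mem_ker.mpr hw), map_zero]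
  -- evaluating a functional termwise
  have sumG : ∀ G : Z →L[ℝ] ℝ, HasSum (fun n => c n * G (t (f n) (y n))) (G z₀) := by
    intro G
    have h2 := G.hasSum hz₀
    simpa [smul_eq_mul] using h2
  have term1 : ∀ G : Z →L[ℝ] ℝ, ‖G‖ ≤ 1 → G z₀ = S → ∀ n, G (t (f n) (y n)) = 1 := by
    intro G hG hGz₀ n
    have hts : HasSum (fun n => c n * G (t (f n) (y n))) S := hGz₀ ▸ sumG G
    have hle1 : ∀ m, G (t (f m) (y m)) ≤ 1 := by
      intro m
      calc G (t (f m) (y m)) ≤ ‖G (t (f m) (y m))‖ := le_abs_self _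
        _ ≤ ‖G‖ * ‖t (f m) (y m)‖ := G.le_opNorm _
        _ ≤ 1 * (‖f m‖ * ‖y m‖) :=
            mul_le_mul hG (h.norm_tmul_le _ _) (norm_nonneg _) zero_le_one
        _ = 1 := by rw [hf m, hy m]; ring
    by_contra hne
    have hlt : c n * G (t (f n) (y n)) < c n := by
      have h2 := lt_of_le_of_ne (hle1 n) hne
      nlinarith [hc n]
    have hfsum : Summable fun m => c m * G (t (f m) (y m)) := ⟨S, hts⟩
    have hlts : ∑' m, c m * G (t (f m) (y m)) < S :=
      hSdef ▸ Summable.tsum_lt_tsum (fun m => by nlinarith [hle1 m, (hc m).le]) hlt hfsum hsum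
    rw [hts.tsum_eq] at hlts
    exact lt_irrefl S hlts
  have sumG1 : ∀ G : Z →L[ℝ] ℝ, (∀ n, G (t (f n) (y n)) = 1) → G z₀ = S := by
    intro G hGn
    have h2 : HasSum (fun n => c n) (G z₀) := by
      have h3 := sumG G
      simpa [hGn] using h3
    exact h2.unique hcs
  tfae_have 1 → 2 := by
    intro h1
    have hq0ne : (Submodule.Quotient.mk z₀ : Z ⧸ K) ≠ 0 := by
      refine norm_pos_iff.mp ?_
      rw [← hdq, h1]; exact hS_pos
    obtain ⟨G, hG1, hGker, hGval⟩ := mkG _ hq0ne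
    have hGz₀ : G z₀ = S := by
      rw [hGval z₀ rfl, ← hdq, h1]
    exact ⟨G, hG1, hGker, term1 G hG1.le hGz₀⟩
  tfae_have 2 → 1 := by
    rintro ⟨G, hG1, hGker, hGn⟩
    have hGz₀ : G z₀ = S := sumG1 G hGn
    refine le_antisymm (auxNA_nuclearNorm_le hrepS) ?_
    refine le_csInf ⟨S, hrepS⟩ ?_
    rintro r ⟨g, yy, hs, hTx, rfl⟩
    obtain ⟨w, hw, hwle⟩ := auxNA_elem h.norm_tmul_le hs
    have hJw : J w = T := ContinuousLinearMap.ext fun x =>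
      (auxNA_eval hJ hw x).unique (hTx x)
    have hGw : G w = G z₀ := by
      have h0 : G (w - z₀) = 0 := hGker _ (by rw [map_sub, hJw, hJz₀, sub_self])
      rw [map_sub] at h0
      exact sub_eq_zero.mp h0
    calc S = G w := by rw [hGw, hGz₀]
      _ ≤ ‖G w‖ := le_abs_self _
      _ ≤ ‖G‖ * ‖w‖ := G.le_opNorm w
      _ = ‖w‖ := by rw [hG1, one_mul]
      _ ≤ _ := hwle
  tfae_have 1 → 3 := by
    intro h1 G hG1 hGker hGz₀
    exact term1 G hG1.le (hGz₀.trans h1)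
  tfae_have 3 → 1 := by
    intro h3
    by_cases hq0 : (Submodule.Quotient.mk z₀ : Z ⧸ K) = 0
    · exfalso
      have hnn0 : nuclearNorm T = 0 := by rw [hdq, hq0, norm_zero]
      have hJz₀0 : J z₀ = 0 :=
        LinearMap.mem_ker.mp ((Submodule.Quotient.mk_eq_zero K).mp hq0)
      obtain ⟨x₀, hx₀⟩ : ∃ x : X, f 0 x ≠ 0 := by
        by_contra hall
        push_neg at hall
        have hf0 : f 0 = 0 := ContinuousLinearMap.ext fun x => hall x
        have := hf 0
        rw [hf0, norm_zero] at this
        exact zero_ne_one this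
      have hy0 : y 0 ≠ 0 := by
        intro h0
        have := hy 0
        rw [h0, norm_zero] at this
        exact zero_ne_one this
      have hqne : (Submodule.Quotient.mk (t (f 0) (y 0)) : Z ⧸ K) ≠ 0 := by
        rw [Ne, Submodule.Quotient.mk_eq_zero]
        intro hmem
        have hJ0 : J (t (f 0) (y 0)) = 0 := LinearMap.mem_ker.mp hmem
        have h0 : f 0 x₀ • y 0 = (0 : Y) := by
          rw [← hJ (f 0) (y 0) x₀, hJ0]; rfl
        rcases smul_eq_zero.mp h0 with h' | h'
        exacts [hx₀ h', hy0 h']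
      obtain ⟨G, hG1, hGker, hGval⟩ := mkG _ hqne
      have hGz₀ : G z₀ = 0 := hGker z₀ hJz₀0
      have hone := h3 G hG1 hGker (hGz₀.trans hnn0.symm) 0
      have hnegone := h3 (-G) (by rw [norm_neg, hG1])
        (fun w hw => by simp [hGker w hw]) (by simp [hGz₀, hnn0]) 0
      rw [ContinuousLinearMap.neg_apply, hone] at hnegone
      linarith
    · obtain ⟨G, hG1, hGker, hGval⟩ := mkG _ hq0
      have hGz₀ : G z₀ = nuclearNorm T := by
        rw [hGval z₀ rfl, hdq]
      have hall := h3 G hG1 hGker hGz₀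
      have h2 := sumG1 G hall
      rw [hGz₀] at h2
      exact h2
  tfae_finish
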